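/- Fix n and a decoration δ : {1,…,n} → {none, down, up, updown}. For every permutation σ of {1,…,n}, there is exactly one permutation τ with τ ≡_δ σ such that τ has no occurrence of a pattern cab with δ(b) ∈ {down, updown} (that is, no positions p < q < r with τ(p) = c, τ(q) = a, τ(r) = b and a < b < c and δ(b) ∈ {down, updown}) and no occurrence of a pattern bca with δ(b) ∈ {up, updown} (no positions p < q < r with τ(p) = b, τ(q) = c, τ(r) = a, a < b < c and δ(b) ∈ {up, updown}); moreover this τ satisfies inv(τ) ⊆ inv(σ), i.e., τ is the minimal element of its congruence class in the right weak order. -/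

import Mathlib

/-- The four possible decorations of a value. -/
inductive Decoration : Type
  | none | down | up | updown
  deriving DecidableEq

/-- The set of (value) inversions of a permutation `σ` of `{1,…,n}`;
the right weak order is `σ ≤ τ` iff `invSet σ ⊆ invSet τ`. -/
def invSet (n : ℕ) (σ : Equiv.Perm (Fin n)) : Set (Fin n × Fin n) :=
  {p | p.1 < p.2 ∧ σ⁻¹ p.2 < σ⁻¹ p.1}

/-- An elementary permutree exchange for the decoration `δ`. -/
def PermutreeMove (n : ℕ) (δ : Fin n → Decoration)
    (σ τ : Equiv.Perm (Fin n)) : Prop :=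
  ∃ i j : Fin n, (i : ℕ) + 1 = (j : ℕ) ∧ σ i < σ j ∧ τ = σ * Equiv.swap i j ∧
    ∃ b : Fin n, σ i < b ∧ b < σ j ∧
      (((δ b = Decoration.down ∨ δ b = Decoration.updown) ∧ j < σ⁻¹ b) ∨
        ((δ b = Decoration.up ∨ δ b = Decoration.updown) ∧ σ⁻¹ b < i))

/-- The `δ`-permutree congruence: the equivalence relation on permutations
generated by the elementary permutree exchanges. -/
inductive PermutreeCong (n : ℕ) (δ : Fin n → Decoration) :
    Equiv.Perm (Fin n) → Equiv.Perm (Fin n) → Prop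
  | rel : ∀ {σ τ}, PermutreeMove n δ σ τ → PermutreeCong n δ σ τ
  | refl : ∀ σ, PermutreeCong n δ σ σ
  | symm : ∀ {σ τ}, PermutreeCong n δ σ τ → PermutreeCong n δ τ σ
  | trans : ∀ {σ τ ρ}, PermutreeCong n δ σ τ → PermutreeCong n δ τ ρ →
      PermutreeCong n δ σ ρ

/-- `τ` avoids the patterns `cab` with `δ b ∈ {down, updown}` (no positions
`p < q < r` with `τ q < τ r < τ p` and `δ (τ r)` a down decoration) and `bca`
with `δ b ∈ {up, updown}` (no positions `p < q < r` with `τ r < τ p < τ q`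
and `δ (τ p)` an up decoration). -/
def PermutreePatternAvoiding (n : ℕ) (δ : Fin n → Decoration)
    (τ : Equiv.Perm (Fin n)) : Prop :=
  (¬ ∃ p q r : Fin n, p < q ∧ q < r ∧ τ q < τ r ∧ τ r < τ p ∧
      (δ (τ r) = Decoration.down ∨ δ (τ r) = Decoration.updown)) ∧
  (¬ ∃ p q r : Fin n, p < q ∧ q < r ∧ τ r < τ p ∧ τ p < τ q ∧
      (δ (τ p) = Decoration.up ∨ δ (τ p) = Decoration.updown))

/-- A descent step datum expressed purely in terms of `τ`. -/
def DStep (n : ℕ) (δ : Fin n → Decoration) (τ : Equiv.Perm (Fin n)) (i j : Fin n) : Prop :=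
  (i : ℕ) + 1 = (j : ℕ) ∧ τ j < τ i ∧
    ∃ b : Fin n, τ j < b ∧ b < τ i ∧
      (((δ b = Decoration.down ∨ δ b = Decoration.updown) ∧ j < τ⁻¹ b) ∨
        ((δ b = Decoration.up ∨ δ b = Decoration.updown) ∧ τ⁻¹ b < i))

lemma swap_lt_swap_iff {n : ℕ} {i j : Fin n} (hij : (i:ℕ)+1 = j) (x y : Fin n) :
    Equiv.swap i j y < Equiv.swap i j x ↔ (y < x ∧ ¬(x = j ∧ y = i)) ∨ (x = i ∧ y = j) := by
  simp only [Equiv.swap_apply_def]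
  simp only [Fin.ext_iff, Fin.lt_def]
  split_ifs <;> omega

lemma inv_mul_swap {n : ℕ} (τ : Equiv.Perm (Fin n)) (i j b : Fin n)
    (h1 : b ≠ τ i) (h2 : b ≠ τ j) : (τ * Equiv.swap i j)⁻¹ b = τ⁻¹ b := by
  rw [mul_inv_rev, Equiv.Perm.mul_apply, Equiv.swap_inv, Equiv.swap_apply_of_ne_of_ne]
  · intro h; exact h1 (by rw [← h]; simp)
  · intro h; exact h2 (by rw [← h]; simp)

lemma move_iff_dstep {n : ℕ} {δ : Fin n → Decoration} {σ τ : Equiv.Perm (Fin n)} :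
    PermutreeMove n δ σ τ ↔ ∃ i j : Fin n, DStep n δ τ i j ∧ σ = τ * Equiv.swap i j := by
  constructor
  · rintro ⟨i, j, hij, hlt, hτ, b, hb1, hb2, hcond⟩
    have hτi : τ i = σ j := by rw [hτ]; simp
    have hτj : τ j = σ i := by rw [hτ]; simp
    have hinv : τ⁻¹ b = σ⁻¹ b := by rw [hτ]; exact inv_mul_swap σ i j b hb1.ne' hb2.ne
    refine ⟨i, j, ⟨hij, ?_, b, ?_, ?_, ?_⟩, ?_⟩
    · rw [hτi, hτj]; exact hlt
    · rw [hτj]; exact hb1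
    · rw [hτi]; exact hb2
    · rw [hinv]; exact hcond
    · rw [hτ, mul_assoc, Equiv.swap_mul_self, mul_one]
  · rintro ⟨i, j, ⟨hij, hd, b, hb1, hb2, hcond⟩, hσ⟩
    have hσi : σ i = τ j := by rw [hσ]; simp
    have hσj : σ j = τ i := by rw [hσ]; simp
    have hinv : σ⁻¹ b = τ⁻¹ b := by rw [hσ]; exact inv_mul_swap τ i j b hb2.ne hb1.ne'
    refine ⟨i, j, hij, ?_, ?_, b, ?_, ?_, ?_⟩
    · rw [hσi, hσj]; exact hd
    · rw [hσ, mul_assoc, Equiv.swap_mul_self, mul_one]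
    · rw [hσi]; exact hb1
    · rw [hσj]; exact hb2
    · rw [hinv]; exact hcond

lemma dstep_invSet {n : ℕ} {δ : Fin n → Decoration} {τ : Equiv.Perm (Fin n)} {i j : Fin n}
    (h : DStep n δ τ i j) :
    invSet n τ = insert (τ j, τ i) (invSet n (τ * Equiv.swap i j)) ∧
      (τ j, τ i) ∉ invSet n (τ * Equiv.swap i j) := by
  obtain ⟨hij, hd, -⟩ := h
  have hne : i ≠ j := by intro h; rw [h] at hij; omega
  have hiltj : i < j := by rw [Fin.lt_def]; omega
  have hσinv : ∀ v, (τ * Equiv.swap i j)⁻¹ v = Equiv.swap i j (τ⁻¹ v) := by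
    intro v; rw [mul_inv_rev, Equiv.Perm.mul_apply, Equiv.swap_inv]
  constructor
  · ext ⟨a, c⟩
    simp only [invSet, Set.mem_setOf_eq, Set.mem_insert_iff, hσinv, Prod.mk.injEq]
    rw [swap_lt_swap_iff hij]
    constructor
    · rintro ⟨hac, hca⟩
      by_cases hx : τ⁻¹ a = j ∧ τ⁻¹ c = i
      · left
        constructor
        · have := congrArg τ hx.1; simpa using this
        · have := congrArg τ hx.2; simpa using this
      · right; exact ⟨hac, Or.inl ⟨hca, hx⟩⟩
    · rintro (⟨ha, hc⟩ | ⟨hac, (⟨hca, -⟩ | ⟨hi, hj⟩)⟩)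
      · subst ha; subst hc
        exact ⟨hd, by simpa using hiltj⟩
      · exact ⟨hac, hca⟩
      · exfalso
        have ha : a = τ i := by have := congrArg τ hi; simpa using this
        have hc : c = τ j := by have := congrArg τ hj; simpa using this
        rw [ha, hc] at hac
        exact absurd hd (not_lt.mpr hac.le)
  · simp only [invSet, Set.mem_setOf_eq, hσinv, (by simp : ∀ x, τ⁻¹ (τ x) = x),
      Equiv.swap_apply_left, Equiv.swap_apply_right]
    rintro ⟨-, hji⟩
    exact absurd hji (not_lt.mpr hiltj.le)

/-- The set of inversions as a finset. -/
def invFinset (n : ℕ) (σ : Equiv.Perm (Fin n)) : Finset (Fin n × Fin n) :=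
  Finset.univ.filter (fun p => p.1 < p.2 ∧ σ⁻¹ p.2 < σ⁻¹ p.1)

lemma coe_invFinset (n : ℕ) (σ : Equiv.Perm (Fin n)) :
    (invFinset n σ : Set (Fin n × Fin n)) = invSet n σ := by
  ext p; simp [invFinset, invSet]

/-- Number of inversions. -/
def invN (n : ℕ) (σ : Equiv.Perm (Fin n)) : ℕ := (invFinset n σ).card

/-- The one-step reduction relation (towards fewer inversions). -/
def Red (n : ℕ) (δ : Fin n → Decoration) (τ σ : Equiv.Perm (Fin n)) : Prop :=
  PermutreeMove n δ σ τ

lemma red_invSet {n : ℕ} {δ : Fin n → Decoration} {τ σ : Equiv.Perm (Fin n)}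
    (h : Red n δ τ σ) : invSet n σ ⊆ invSet n τ := by
  obtain ⟨i, j, hd, rfl⟩ := move_iff_dstep.mp h
  rw [(dstep_invSet hd).1]
  exact Set.subset_insert _ _

lemma red_invN {n : ℕ} {δ : Fin n → Decoration} {τ σ : Equiv.Perm (Fin n)}
    (h : Red n δ τ σ) : invN n σ < invN n τ := by
  obtain ⟨i, j, hd, rfl⟩ := move_iff_dstep.mp h
  obtain ⟨heq, hnot⟩ := dstep_invSet hd
  have hfs : invFinset n τ = insert (τ j, τ i) (invFinset n (τ * Equiv.swap i j)) := by
    apply Finset.coe_injective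
    rw [Finset.coe_insert, coe_invFinset, coe_invFinset, heq]
  have hnot' : (τ j, τ i) ∉ invFinset n (τ * Equiv.swap i j) := by
    rw [← Finset.mem_coe, coe_invFinset]; exact hnot
  rw [invN, invN, hfs, Finset.card_insert_of_notMem hnot']
  omega

lemma rt_invSet {n : ℕ} {δ : Fin n → Decoration} {τ σ : Equiv.Perm (Fin n)}
    (h : Relation.ReflTransGen (Red n δ) τ σ) : invSet n σ ⊆ invSet n τ := by
  induction h with
  | refl => exact subset_rfl
  | tail _ hstep ih => exact (red_invSet hstep).trans ih

lemma rt_cong {n : ℕ} {δ : Fin n → Decoration} {τ σ : Equiv.Perm (Fin n)}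
    (h : Relation.ReflTransGen (Red n δ) τ σ) : PermutreeCong n δ σ τ := by
  induction h with
  | refl => exact PermutreeCong.refl _
  | tail _ hstep ih => exact PermutreeCong.trans (PermutreeCong.rel hstep) ih

lemma exists_crossing {n : ℕ} (τ : Equiv.Perm (Fin n)) (b : Fin n) {p q : Fin n}
    (hpq : p < q) (hp : b < τ p) (hq : τ q < b)
    (hb : ∀ x, p ≤ x → x ≤ q → τ x ≠ b) :
    ∃ i j : Fin n, (i : ℕ) + 1 = (j : ℕ) ∧ p ≤ i ∧ j ≤ q ∧ τ j < b ∧ b < τ i := by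
  classical
  set S : Finset (Fin n) :=
    Finset.univ.filter (fun x => p ≤ x ∧ x < q ∧ b < τ x) with hS
  have hpS : p ∈ S := by simp [hS, hpq, hp]
  have hSne : S.Nonempty := ⟨p, hpS⟩
  set i := S.max' hSne with hi
  have hiS : i ∈ S := S.max'_mem hSne
  have hiprop : p ≤ i ∧ i < q ∧ b < τ i := by simpa [hS] using hiS
  have hiq : (i : ℕ) + 1 ≤ (q : ℕ) := hiprop.2.1
  have hjlt : (i : ℕ) + 1 < n := lt_of_le_of_lt hiq q.isLt
  refine ⟨i, ⟨(i : ℕ) + 1, hjlt⟩, rfl, hiprop.1, ?_, ?_, hiprop.2.2⟩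
  · exact hiq
  · set j : Fin n := ⟨(i : ℕ) + 1, hjlt⟩ with hj
    have hij : i < j := by simp [hj, Fin.lt_def]
    have hjq : j ≤ q := hiq
    have hpj : p ≤ j := le_of_lt (lt_of_le_of_lt hiprop.1 hij)
    have hne : τ j ≠ b := hb j hpj hjq
    rcases lt_or_eq_of_le hjq with hlt | heq
    · by_contra hcon
      push_neg at hcon
      have hbj : b < τ j := lt_of_le_of_ne hcon (Ne.symm hne)
      have : j ∈ S := by simp [hS, hpj, hlt, hbj]
      have := S.le_max' j this
      rw [← hi] at this
      exact absurd hij (not_lt.mpr this)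
    · rw [heq]; exact hq

lemma dstep_of_not_avoiding {n : ℕ} {δ : Fin n → Decoration} {τ : Equiv.Perm (Fin n)}
    (h : ¬ PermutreePatternAvoiding n δ τ) : ∃ i j : Fin n, DStep n δ τ i j := by
  rw [PermutreePatternAvoiding, not_and_or, not_not, not_not] at h
  rcases h with ⟨p, q, r, hpq, hqr, h1, h2, hδ⟩ | ⟨p, q, r, hpq, hqr, h1, h2, hδ⟩
  · -- cab pattern: b = τ r, crossing between p and q
    obtain ⟨i, j, hij, hpi, hjq, hjb, hbi⟩ := exists_crossing τ (τ r) hpq h2 h1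
      (fun x hx1 hx2 hxe => by
        have : x = r := τ.injective hxe
        subst this
        exact absurd (lt_of_le_of_lt hx2 hqr) (lt_irrefl x))
    refine ⟨i, j, hij, lt_trans hjb hbi, τ r, hjb, hbi, Or.inl ⟨hδ, ?_⟩⟩
    rw [Equiv.Perm.inv_def, Equiv.symm_apply_apply]
    exact lt_of_le_of_lt hjq hqr
  · -- bca pattern: b = τ p, crossing between q and r
    obtain ⟨i, j, hij, hqi, hjr, hjb, hbi⟩ := exists_crossing τ (τ p) hqr h2 h1
      (fun x hx1 hx2 hxe => by
        have : x = p := τ.injective hxe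
        subst this
        exact absurd (lt_of_lt_of_le hpq hx1) (lt_irrefl x))
    refine ⟨i, j, hij, lt_trans hjb hbi, τ p, hjb, hbi, Or.inr ⟨hδ, ?_⟩⟩
    rw [Equiv.Perm.inv_def, Equiv.symm_apply_apply]
    exact lt_of_lt_of_le hpq hqi

lemma not_avoiding_of_dstep {n : ℕ} {δ : Fin n → Decoration} {τ : Equiv.Perm (Fin n)}
    {i j : Fin n} (h : DStep n δ τ i j) : ¬ PermutreePatternAvoiding n δ τ := by
  obtain ⟨hij, hd, b, hb1, hb2, hcond⟩ := h
  have hiltj : i < j := by rw [Fin.lt_def]; omega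
  have hτb : τ (τ⁻¹ b) = b := τ.apply_symm_apply b
  rintro ⟨hA, hB⟩
  rcases hcond with ⟨hδ, hr⟩ | ⟨hδ, hr⟩
  · exact hA ⟨i, j, τ⁻¹ b, hiltj, hr, by rw [hτb]; exact hb1, by rw [hτb]; exact hb2,
      by rw [hτb]; exact hδ⟩
  · exact hB ⟨τ⁻¹ b, i, j, hr, hiltj, by rw [hτb]; exact hb1, by rw [hτb]; exact hb2,
      by rw [hτb]; exact hδ⟩

lemma swap_conj_eq {n : ℕ} (s : Equiv.Perm (Fin n)) (x y : Fin n) :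
    s * Equiv.swap x y * s⁻¹ = Equiv.swap (s x) (s y) :=
  (Equiv.swap_apply_apply s x y).symm

lemma swap_braid {n : ℕ} {i j l : Fin n} (hij : i ≠ j) (hil : i ≠ l) (hjl : j ≠ l) :
    Equiv.swap i j * Equiv.swap j l * Equiv.swap i j
      = Equiv.swap j l * Equiv.swap i j * Equiv.swap j l := by
  have h1 : Equiv.swap i j * Equiv.swap j l * Equiv.swap i j = Equiv.swap i l := by
    nth_rewrite 3 [← Equiv.swap_inv]
    rw [swap_conj_eq, Equiv.swap_apply_right,
      Equiv.swap_apply_of_ne_of_ne hil.symm hjl.symm]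
  have h2 : Equiv.swap j l * Equiv.swap i j * Equiv.swap j l = Equiv.swap i l := by
    nth_rewrite 3 [← Equiv.swap_inv]
    rw [swap_conj_eq, Equiv.swap_apply_of_ne_of_ne hij hil, Equiv.swap_apply_left]
  rw [h1, h2]

lemma swap_commute {n : ℕ} {i j k l : Fin n} (h1 : i ≠ k) (h2 : i ≠ l)
    (h3 : j ≠ k) (h4 : j ≠ l) :
    Equiv.swap i j * Equiv.swap k l = Equiv.swap k l * Equiv.swap i j := by
  have h : Equiv.swap k l * Equiv.swap i j * (Equiv.swap k l)⁻¹ = Equiv.swap i j := by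
    rw [swap_conj_eq, Equiv.swap_apply_of_ne_of_ne h1 h2,
      Equiv.swap_apply_of_ne_of_ne h3 h4]
  rw [Equiv.swap_inv] at h
  calc Equiv.swap i j * Equiv.swap k l
      = (Equiv.swap k l * Equiv.swap i j * Equiv.swap k l) * Equiv.swap k l := by rw [h]
    _ = Equiv.swap k l * Equiv.swap i j := by
        rw [mul_assoc, Equiv.swap_mul_self, mul_one]

lemma inv_ne_of_ne_apply {n : ℕ} {τ : Equiv.Perm (Fin n)} {b w : Fin n}
    (h : b ≠ τ w) : τ⁻¹ b ≠ w :=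
  fun he => h (by rw [← he, Equiv.Perm.inv_def, Equiv.apply_symm_apply])

lemma red_of_dstep {n : ℕ} {δ : Fin n → Decoration} {τ : Equiv.Perm (Fin n)} {i j : Fin n}
    (h : DStep n δ τ i j) : Red n δ τ (τ * Equiv.swap i j) :=
  move_iff_dstep.mpr ⟨i, j, h, rfl⟩

/-- Braid case of local confluence: adjacent steps at `(i,j)` and `(j,l)`. -/
lemma lc_braid {n : ℕ} {δ : Fin n → Decoration} {τ : Equiv.Perm (Fin n)} {i j l : Fin n}
    (h1 : DStep n δ τ i j) (h2 : DStep n δ τ j l) :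
    ∃ ρ, Relation.ReflTransGen (Red n δ) (τ * Equiv.swap i j) ρ ∧
      Relation.ReflTransGen (Red n δ) (τ * Equiv.swap j l) ρ := by
  obtain ⟨hij, hd1, b₁, hb11, hb12, hc1⟩ := h1
  obtain ⟨hjl, hd2, b₂, hb21, hb22, hc2⟩ := h2
  -- distinctness of indices
  have hij' : i ≠ j := by simp [Fin.ext_iff]; omega
  have hil' : i ≠ l := by simp [Fin.ext_iff]; omega
  have hjl' : j ≠ l := by simp [Fin.ext_iff]; omega
  -- positions of the witnesses
  set p₁ := τ⁻¹ b₁ with hp₁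
  set p₂ := τ⁻¹ b₂ with hp₂
  have hb₁x : b₁ ≠ τ i := hb12.ne
  have hb₁y : b₁ ≠ τ j := hb11.ne'
  have hb₁z : b₁ ≠ τ l := (lt_trans hd2 hb11).ne'
  have hb₂y : b₂ ≠ τ j := hb22.ne
  have hb₂z : b₂ ≠ τ l := hb21.ne'
  have hb₂x : b₂ ≠ τ i := (lt_trans hb22 hd1).ne
  have hp₁i : p₁ ≠ i := inv_ne_of_ne_apply hb₁x
  have hp₁j : p₁ ≠ j := inv_ne_of_ne_apply hb₁y
  have hp₁l : p₁ ≠ l := inv_ne_of_ne_apply hb₁z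
  have hp₂i : p₂ ≠ i := inv_ne_of_ne_apply hb₂x
  have hp₂j : p₂ ≠ j := inv_ne_of_ne_apply hb₂y
  have hp₂l : p₂ ≠ l := inv_ne_of_ne_apply hb₂z
  -- refined position conditions
  have hc1' : ((δ b₁ = Decoration.down ∨ δ b₁ = Decoration.updown) ∧ l < p₁) ∨
      ((δ b₁ = Decoration.up ∨ δ b₁ = Decoration.updown) ∧ p₁ < i) := by
    rcases hc1 with ⟨hδ, hr⟩ | ⟨hδ, hr⟩
    · left; refine ⟨hδ, ?_⟩
      have hne : (p₁ : ℕ) ≠ (l : ℕ) := fun hh => hp₁l (Fin.ext hh)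
      rw [Fin.lt_def] at hr ⊢; omega
    · right; exact ⟨hδ, hr⟩
  have hc2' : ((δ b₂ = Decoration.down ∨ δ b₂ = Decoration.updown) ∧ l < p₂) ∨
      ((δ b₂ = Decoration.up ∨ δ b₂ = Decoration.updown) ∧ p₂ < i) := by
    rcases hc2 with ⟨hδ, hr⟩ | ⟨hδ, hr⟩
    · left; exact ⟨hδ, hr⟩
    · right; refine ⟨hδ, ?_⟩
      have hne : (p₂ : ℕ) ≠ (i : ℕ) := fun hh => hp₂i (Fin.ext hh)
      rw [Fin.lt_def] at hr ⊢; omega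
  set σ₁ := τ * Equiv.swap i j with hσ₁
  set σ₂ := τ * Equiv.swap j l with hσ₂
  -- values of σ₁
  have v1i : σ₁ i = τ j := by simp [hσ₁]
  have v1j : σ₁ j = τ i := by simp [hσ₁]
  have v1l : σ₁ l = τ l := by
    simp [hσ₁, Equiv.swap_apply_of_ne_of_ne hil'.symm hjl'.symm]
  have i1 : σ₁⁻¹ b₂ = p₂ := inv_mul_swap τ i j b₂ hb₂x hb₂y
  -- first step from σ₁ : exchange at (j, l)
  have D1 : DStep n δ σ₁ j l := by
    refine ⟨hjl, by rw [v1j, v1l]; exact lt_trans hd2 hd1, b₂, ?_, ?_, ?_⟩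
    · rw [v1l]; exact hb21
    · rw [v1j]; exact lt_trans hb22 hd1
    · rw [i1]
      rcases hc2' with ⟨hδ, hr⟩ | ⟨hδ, hr⟩
      · exact Or.inl ⟨hδ, hr⟩
      · exact Or.inr ⟨hδ, lt_trans hr (by rw [Fin.lt_def]; omega)⟩
  set σ₁' := σ₁ * Equiv.swap j l with hσ₁'
  have v1'i : σ₁' i = τ j := by
    rw [hσ₁', Equiv.Perm.mul_apply, Equiv.swap_apply_of_ne_of_ne hij' hil', v1i]
  have v1'j : σ₁' j = τ l := by rw [hσ₁', Equiv.Perm.mul_apply, Equiv.swap_apply_left, v1l]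
  have i1' : σ₁'⁻¹ b₂ = p₂ := by
    rw [hσ₁', inv_mul_swap σ₁ j l b₂ (by rw [v1j]; exact hb₂x) (by rw [v1l]; exact hb₂z), i1]
  -- second step from σ₁' : exchange at (i, j)
  have D1' : DStep n δ σ₁' i j := by
    refine ⟨hij, by rw [v1'i, v1'j]; exact hd2, b₂, ?_, ?_, ?_⟩
    · rw [v1'j]; exact hb21
    · rw [v1'i]; exact hb22
    · rw [i1']
      rcases hc2' with ⟨hδ, hr⟩ | ⟨hδ, hr⟩
      · exact Or.inl ⟨hδ, lt_trans (by rw [Fin.lt_def]; omega) hr⟩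
      · exact Or.inr ⟨hδ, hr⟩
  -- values of σ₂
  have v2i : σ₂ i = τ i := by
    rw [hσ₂, Equiv.Perm.mul_apply, Equiv.swap_apply_of_ne_of_ne hij' hil']
  have v2j : σ₂ j = τ l := by simp [hσ₂]
  have v2l : σ₂ l = τ j := by simp [hσ₂]
  have i2 : σ₂⁻¹ b₁ = p₁ := inv_mul_swap τ j l b₁ hb₁y hb₁z
  -- first step from σ₂ : exchange at (i, j)
  have D2 : DStep n δ σ₂ i j := by
    refine ⟨hij, by rw [v2i, v2j]; exact lt_trans hd2 hd1, b₁, ?_, ?_, ?_⟩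
    · rw [v2j]; exact lt_trans hd2 hb11
    · rw [v2i]; exact hb12
    · rw [i2]
      rcases hc1' with ⟨hδ, hr⟩ | ⟨hδ, hr⟩
      · exact Or.inl ⟨hδ, lt_trans (by rw [Fin.lt_def]; omega) hr⟩
      · exact Or.inr ⟨hδ, hr⟩
  set σ₂' := σ₂ * Equiv.swap i j with hσ₂'
  have v2'j : σ₂' j = τ i := by rw [hσ₂', Equiv.Perm.mul_apply, Equiv.swap_apply_right, v2i]
  have v2'l : σ₂' l = τ j := by
    rw [hσ₂', Equiv.Perm.mul_apply, Equiv.swap_apply_of_ne_of_ne hil'.symm hjl'.symm, v2l]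
  have i2' : σ₂'⁻¹ b₁ = p₁ := by
    rw [hσ₂', inv_mul_swap σ₂ i j b₁ (by rw [v2i]; exact hb₁x) (by rw [v2j]; exact hb₁z), i2]
  -- second step from σ₂' : exchange at (j, l)
  have D2' : DStep n δ σ₂' j l := by
    refine ⟨hjl, by rw [v2'j, v2'l]; exact hd1, b₁, ?_, ?_, ?_⟩
    · rw [v2'l]; exact hb11
    · rw [v2'j]; exact hb12
    · rw [i2']
      rcases hc1' with ⟨hδ, hr⟩ | ⟨hδ, hr⟩
      · exact Or.inl ⟨hδ, hr⟩
      · exact Or.inr ⟨hδ, lt_trans hr (by rw [Fin.lt_def]; omega)⟩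
  -- the two chains meet
  have hmeet : σ₁' * Equiv.swap i j = σ₂' * Equiv.swap j l := by
    have hb : Equiv.swap i j * (Equiv.swap j l * Equiv.swap i j)
        = Equiv.swap j l * (Equiv.swap i j * Equiv.swap j l) := by
      rw [← mul_assoc, ← mul_assoc, swap_braid hij' hil' hjl']
    rw [hσ₁', hσ₂', hσ₁, hσ₂, mul_assoc, mul_assoc, mul_assoc, mul_assoc, hb]
  refine ⟨σ₁' * Equiv.swap i j, ?_, ?_⟩
  · exact Relation.ReflTransGen.head (red_of_dstep D1)
      (Relation.ReflTransGen.single (red_of_dstep D1'))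
  · rw [hmeet]
    exact Relation.ReflTransGen.head (red_of_dstep D2)
      (Relation.ReflTransGen.single (red_of_dstep D2'))

/-- Commuting case of local confluence: steps at `(i,j)` and `(k,l)` with `j < k`. -/
lemma lc_comm {n : ℕ} {δ : Fin n → Decoration} {τ : Equiv.Perm (Fin n)} {i j k l : Fin n}
    (h1 : DStep n δ τ i j) (h2 : DStep n δ τ k l) (hjk : (j : ℕ) < (k : ℕ)) :
    ∃ ρ, Relation.ReflTransGen (Red n δ) (τ * Equiv.swap i j) ρ ∧
      Relation.ReflTransGen (Red n δ) (τ * Equiv.swap k l) ρ := by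
  obtain ⟨hij, hd1, b₁, hb11, hb12, hc1⟩ := h1
  obtain ⟨hkl, hd2, b₂, hb21, hb22, hc2⟩ := h2
  have hik' : i ≠ k := by simp [Fin.ext_iff]; omega
  have hil' : i ≠ l := by simp [Fin.ext_iff]; omega
  have hjk' : j ≠ k := by simp [Fin.ext_iff]; omega
  have hjl' : j ≠ l := by simp [Fin.ext_iff]; omega
  set p₁ := τ⁻¹ b₁ with hp₁
  set p₂ := τ⁻¹ b₂ with hp₂
  set σ₁ := τ * Equiv.swap i j with hσ₁
  set σ₂ := τ * Equiv.swap k l with hσ₂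
  have hinv1 : ∀ v, σ₁⁻¹ v = Equiv.swap i j (τ⁻¹ v) := by
    intro v; rw [hσ₁, mul_inv_rev, Equiv.Perm.mul_apply, Equiv.swap_inv]
  have hinv2 : ∀ v, σ₂⁻¹ v = Equiv.swap k l (τ⁻¹ v) := by
    intro v; rw [hσ₂, mul_inv_rev, Equiv.Perm.mul_apply, Equiv.swap_inv]
  have v1k : σ₁ k = τ k := by
    rw [hσ₁, Equiv.Perm.mul_apply, Equiv.swap_apply_of_ne_of_ne hik'.symm hjk'.symm]
  have v1l : σ₁ l = τ l := by
    rw [hσ₁, Equiv.Perm.mul_apply, Equiv.swap_apply_of_ne_of_ne hil'.symm hjl'.symm]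
  have v2i : σ₂ i = τ i := by
    rw [hσ₂, Equiv.Perm.mul_apply, Equiv.swap_apply_of_ne_of_ne hik' hil']
  have v2j : σ₂ j = τ j := by
    rw [hσ₂, Equiv.Perm.mul_apply, Equiv.swap_apply_of_ne_of_ne hjk' hjl']
  have D1 : DStep n δ σ₁ k l := by
    refine ⟨hkl, by rw [v1k, v1l]; exact hd2, b₂, by rw [v1l]; exact hb21,
      by rw [v1k]; exact hb22, ?_⟩
    rw [hinv1, ← hp₂]
    rcases hc2 with ⟨hδ, hr⟩ | ⟨hδ, hr⟩
    · left; refine ⟨hδ, ?_⟩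
      have hpi : p₂ ≠ i := by
        intro hh; rw [hh] at hr; rw [Fin.lt_def] at hr; omega
      have hpj : p₂ ≠ j := by
        intro hh; rw [hh] at hr; rw [Fin.lt_def] at hr; omega
      rw [Equiv.swap_apply_of_ne_of_ne hpi hpj]
      exact hr
    · right; refine ⟨hδ, ?_⟩
      rw [Fin.lt_def] at hr ⊢
      rcases eq_or_ne p₂ i with hh | hh
      · rw [hh, Equiv.swap_apply_left]; omega
      rcases eq_or_ne p₂ j with hh2 | hh2
      · rw [hh2, Equiv.swap_apply_right]; omega
      · rw [Equiv.swap_apply_of_ne_of_ne hh hh2]; exact hr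
  have D2 : DStep n δ σ₂ i j := by
    refine ⟨hij, by rw [v2i, v2j]; exact hd1, b₁, by rw [v2j]; exact hb11,
      by rw [v2i]; exact hb12, ?_⟩
    rw [hinv2, ← hp₁]
    rcases hc1 with ⟨hδ, hr⟩ | ⟨hδ, hr⟩
    · left; refine ⟨hδ, ?_⟩
      rw [Fin.lt_def] at hr ⊢
      rcases eq_or_ne p₁ k with hh | hh
      · rw [hh, Equiv.swap_apply_left]; omega
      rcases eq_or_ne p₁ l with hh2 | hh2
      · rw [hh2, Equiv.swap_apply_right]; omega
      · rw [Equiv.swap_apply_of_ne_of_ne hh hh2]; exact hr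
    · right; refine ⟨hδ, ?_⟩
      have hpk : p₁ ≠ k := by
        intro hh; rw [hh] at hr; rw [Fin.lt_def] at hr; omega
      have hpl : p₁ ≠ l := by
        intro hh; rw [hh] at hr; rw [Fin.lt_def] at hr; omega
      rw [Equiv.swap_apply_of_ne_of_ne hpk hpl]
      exact hr
  refine ⟨σ₁ * Equiv.swap k l, Relation.ReflTransGen.single (red_of_dstep D1), ?_⟩
  have hmeet : σ₁ * Equiv.swap k l = σ₂ * Equiv.swap i j := by
    rw [hσ₁, hσ₂, mul_assoc, mul_assoc, swap_commute hik' hil' hjk' hjl']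
  rw [hmeet]
  exact Relation.ReflTransGen.single (red_of_dstep D2)

lemma local_confluence {n : ℕ} {δ : Fin n → Decoration} {τ σ₁ σ₂ : Equiv.Perm (Fin n)}
    (h1 : Red n δ τ σ₁) (h2 : Red n δ τ σ₂) :
    ∃ ρ, Relation.ReflTransGen (Red n δ) σ₁ ρ ∧ Relation.ReflTransGen (Red n δ) σ₂ ρ := by
  obtain ⟨i, j, hd1, rfl⟩ := move_iff_dstep.mp h1
  obtain ⟨k, l, hd2, rfl⟩ := move_iff_dstep.mp h2
  have hij := hd1.1
  have hkl := hd2.1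
  rcases lt_trichotomy (i : ℕ) (k : ℕ) with h | h | h
  · rcases eq_or_lt_of_le (show (j : ℕ) ≤ (k : ℕ) by omega) with he | hlt
    · have hjk : j = k := Fin.ext he
      subst hjk
      exact lc_braid hd1 hd2
    · exact lc_comm hd1 hd2 hlt
  · have hik : i = k := Fin.ext h
    subst hik
    have hjl : j = l := Fin.ext (by omega)
    subst hjl
    exact ⟨_, Relation.ReflTransGen.refl, Relation.ReflTransGen.refl⟩
  · rcases eq_or_lt_of_le (show (l : ℕ) ≤ (i : ℕ) by omega) with he | hlt
    · have hli : l = i := Fin.ext he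
      subst hli
      obtain ⟨ρ, ha, hb⟩ := lc_braid hd2 hd1
      exact ⟨ρ, hb, ha⟩
    · obtain ⟨ρ, ha, hb⟩ := lc_comm hd2 hd1 hlt
      exact ⟨ρ, hb, ha⟩

/-- Newman's lemma for our terminating relation. -/
lemma confluence_aux {n : ℕ} {δ : Fin n → Decoration} :
    ∀ m : ℕ, ∀ τ : Equiv.Perm (Fin n), invN n τ < m →
      ∀ a b, Relation.ReflTransGen (Red n δ) τ a → Relation.ReflTransGen (Red n δ) τ b →
        ∃ c, Relation.ReflTransGen (Red n δ) a c ∧ Relation.ReflTransGen (Red n δ) b c := by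
  intro m
  induction m with
  | zero => intro τ h; omega
  | succ m ih =>
    intro τ hτ a b ha hb
    rcases Relation.ReflTransGen.cases_head ha with rfl | ⟨a₁, ha1, ha2⟩
    · exact ⟨b, hb, Relation.ReflTransGen.refl⟩
    rcases Relation.ReflTransGen.cases_head hb with rfl | ⟨b₁, hb1, hb2⟩
    · exact ⟨a, Relation.ReflTransGen.refl, ha⟩
    obtain ⟨d, hd1, hd2⟩ := local_confluence ha1 hb1
    have hNa : invN n a₁ < m := by have := red_invN ha1; omega
    have hNb : invN n b₁ < m := by have := red_invN hb1; omega
    obtain ⟨e, he1, he2⟩ := ih a₁ hNa a d ha2 hd1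
    obtain ⟨f, hf1, hf2⟩ := ih b₁ hNb b e hb2 (hd2.trans he2)
    exact ⟨f, he1.trans hf2, hf1⟩

lemma confluence {n : ℕ} {δ : Fin n → Decoration} {τ a b : Equiv.Perm (Fin n)}
    (ha : Relation.ReflTransGen (Red n δ) τ a) (hb : Relation.ReflTransGen (Red n δ) τ b) :
    ∃ c, Relation.ReflTransGen (Red n δ) a c ∧ Relation.ReflTransGen (Red n δ) b c :=
  confluence_aux (invN n τ + 1) τ (by omega) a b ha hb

/-- Every permutation reduces to a pattern-avoiding one. -/
lemma exists_nf {n : ℕ} {δ : Fin n → Decoration} :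
    ∀ τ : Equiv.Perm (Fin n), ∃ ρ, Relation.ReflTransGen (Red n δ) τ ρ ∧
      PermutreePatternAvoiding n δ ρ := by
  have H : ∀ m : ℕ, ∀ τ : Equiv.Perm (Fin n), invN n τ < m →
      ∃ ρ, Relation.ReflTransGen (Red n δ) τ ρ ∧ PermutreePatternAvoiding n δ ρ := by
    intro m
    induction m with
    | zero => intro τ h; omega
    | succ m ih =>
      intro τ hτ
      by_cases hav : PermutreePatternAvoiding n δ τ
      · exact ⟨τ, Relation.ReflTransGen.refl, hav⟩
      · obtain ⟨i, j, hd⟩ := dstep_of_not_avoiding hav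
        have hred := red_of_dstep hd
        have : invN n (τ * Equiv.swap i j) < m := by have := red_invN hred; omega
        obtain ⟨ρ, hρ1, hρ2⟩ := ih _ this
        exact ⟨ρ, Relation.ReflTransGen.head hred hρ1, hρ2⟩
  exact fun τ => H (invN n τ + 1) τ (by omega)

/-- Pattern avoiding permutations are normal forms. -/
lemma nf_of_avoiding {n : ℕ} {δ : Fin n → Decoration} {τ ρ : Equiv.Perm (Fin n)}
    (hav : PermutreePatternAvoiding n δ τ)
    (h : Relation.ReflTransGen (Red n δ) τ ρ) : ρ = τ := by
  rcases Relation.ReflTransGen.cases_head h with rfl | ⟨a, ha, -⟩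
  · rfl
  · obtain ⟨i, j, hd, rfl⟩ := move_iff_dstep.mp ha
    exact absurd hav (not_avoiding_of_dstep hd)

/-- Congruent permutations have a common reduct. -/
lemma cong_join {n : ℕ} {δ : Fin n → Decoration} {σ τ : Equiv.Perm (Fin n)}
    (h : PermutreeCong n δ σ τ) :
    ∃ ρ, Relation.ReflTransGen (Red n δ) σ ρ ∧ Relation.ReflTransGen (Red n δ) τ ρ := by
  induction h with
  | rel h => exact ⟨_, Relation.ReflTransGen.refl, Relation.ReflTransGen.single h⟩
  | refl σ => exact ⟨σ, Relation.ReflTransGen.refl, Relation.ReflTransGen.refl⟩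
  | symm _ ih => obtain ⟨ρ, h1, h2⟩ := ih; exact ⟨ρ, h2, h1⟩
  | trans _ _ ih1 ih2 =>
    obtain ⟨ρ₁, h11, h12⟩ := ih1
    obtain ⟨ρ₂, h21, h22⟩ := ih2
    obtain ⟨c, hc1, hc2⟩ := confluence h12 h21
    exact ⟨c, h11.trans hc1, h22.trans hc2⟩

/-- Every `δ`-permutree congruence class contains exactly one permutation
avoiding the patterns `cab` (with `δ b ∈ {down, updown}`) and `bca` (with
`δ b ∈ {up, updown}`); moreover this permutation is the minimal element of
its class in the right weak order. -/
theorem permutree_class_unique_minimal (n : ℕ) (δ : Fin n → Decoration)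
    (σ : Equiv.Perm (Fin n)) :
    ∃ τ : Equiv.Perm (Fin n),
      (PermutreeCong n δ τ σ ∧ PermutreePatternAvoiding n δ τ ∧
        invSet n τ ⊆ invSet n σ) ∧
      ∀ τ' : Equiv.Perm (Fin n),
        PermutreeCong n δ τ' σ → PermutreePatternAvoiding n δ τ' → τ' = τ := by
  obtain ⟨τ, hrt, hav⟩ := exists_nf (δ := δ) σ
  refine ⟨τ, ⟨rt_cong hrt, hav, rt_invSet hrt⟩, ?_⟩
  intro τ' hcong hav'
  obtain ⟨ρ, hρ1, hρ2⟩ := cong_join hcong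
  have hρτ' : ρ = τ' := nf_of_avoiding hav' hρ1
  subst hρτ'
  obtain ⟨c, hc1, hc2⟩ := confluence hrt hρ2
  have h1 : c = τ := nf_of_avoiding hav hc1
  have h2 : c = ρ := nf_of_avoiding hav' hc2
  rw [← h1, h2]
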